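/- Let H_n(x,δ) be the deformed Hermite polynomials defined by H_{n+1} = 2x H_n - (2n+n(n-1)δ) H_{n-1}, H_{-1}=0, H_0=1. Then for all n ≥ 1, d/dx H_n(x,δ) = 2 ∑_{k=0}^{⌊(n-1)/2⌋} (2k)! · binom(n, 2k+1) · (-δ)^k · H_{n-1-2k}(x,δ). -/
import Mathlib


open Finset Polynomial

/-- Deformed Hermite polynomials `H_n(x,δ)` as polynomials over `ℝ`, defined by the
three-term recurrence `H_{n+1} = 2x H_n - (2n + n(n-1)δ) H_{n-1}`, `H_0 = 1`, `H_1 = 2x`. -/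
noncomputable def deformedHermiteP (δ : ℝ) : ℕ → Polynomial ℝ
  | 0 => 1
  | 1 => 2 * Polynomial.X
  | (n + 2) =>
      2 * Polynomial.X * deformedHermiteP δ (n + 1)
        - Polynomial.C (2 * ((n : ℝ) + 1) + ((n : ℝ) + 1) * (n : ℝ) * δ) *
            deformedHermiteP δ n

noncomputable def bR (δ : ℝ) (j : ℕ) : ℝ := 2 * (j : ℝ) + (j : ℝ) * ((j : ℝ) - 1) * δ

noncomputable def cR (δ : ℝ) (n k : ℕ) : ℝ :=
  (Nat.factorial (2 * k) : ℝ) * (Nat.choose n (2 * k + 1) : ℝ) * (-δ) ^ k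

lemma dH_rec (δ : ℝ) (n : ℕ) : deformedHermiteP δ (n + 2)
    = 2 * Polynomial.X * deformedHermiteP δ (n + 1)
      - Polynomial.C (bR δ (n + 1)) * deformedHermiteP δ n := by
  rw [deformedHermiteP]
  congr 2
  unfold bR
  push_cast
  ring

lemma dH_mul_X (δ : ℝ) (j : ℕ) : 2 * Polynomial.X * deformedHermiteP δ j
    = deformedHermiteP δ (j + 1) + Polynomial.C (bR δ j) * deformedHermiteP δ (j - 1) := by
  cases j with
  | zero => simp [deformedHermiteP, bR]
  | succ n => rw [dH_rec, Nat.add_sub_cancel]; ring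

lemma key (δ : ℝ) (m k : ℕ) :
    cR δ (m + 3) (k + 1)
      = cR δ (m + 2) (k + 1) + cR δ (m + 2) k * bR δ (m + 1 - 2 * k)
        - bR δ (m + 2) * cR δ (m + 1) k := by
  by_cases hk : 2 * k ≤ m + 1
  · have hu : ((m + 1 - 2 * k : ℕ) : ℝ) = (m : ℝ) + 1 - 2 * (k : ℝ) := by
      push_cast [Nat.cast_sub hk]; ring
    have ha : ((Nat.choose (m + 3) (2 * (k + 1) + 1) : ℕ) : ℝ)
        = (Nat.choose (m + 2) (2 * k + 2) : ℝ) + (Nat.choose (m + 2) (2 * k + 3) : ℝ) := by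
      have : Nat.choose (m + 3) (2 * k + 3) = Nat.choose (m+2) (2*k+2) + Nat.choose (m+2) (2*k+3) :=
        Nat.choose_succ_succ (m + 2) (2 * k + 2)
      push_cast [show 2 * (k+1) + 1 = 2 * k + 3 by ring, this]; ring
    have h2 : (Nat.choose (m + 2) (2 * k + 1) : ℝ) * ((m : ℝ) + 1 - 2 * k)
        = (Nat.choose (m + 2) (2 * k + 2) : ℝ) * (2 * (k : ℝ) + 2) := by
      have := Nat.choose_succ_right_eq (m + 2) (2 * k + 1)
      have h' : (m + 2) - (2 * k + 1) = m + 1 - 2 * k := by omega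
      rw [h'] at this
      have := congrArg (fun x : ℕ => (x : ℝ)) this
      push_cast [Nat.cast_sub hk] at this
      linarith [this]
    have h3 : ((m : ℝ) + 2) * (Nat.choose (m + 1) (2 * k + 1) : ℝ)
        = (Nat.choose (m + 2) (2 * k + 2) : ℝ) * (2 * (k : ℝ) + 2) := by
      have := Nat.add_one_mul_choose_eq (m + 1) (2 * k + 1)
      have := congrArg (fun x : ℕ => (x : ℝ)) this
      push_cast at this
      linarith [this]
    have h4 : ((Nat.factorial (2 * (k + 1)) : ℕ) : ℝ)
        = (2 * (k : ℝ) + 2) * (2 * (k : ℝ) + 1) * (Nat.factorial (2 * k) : ℝ) := by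
      have : 2 * (k + 1) = (2 * k + 1) + 1 := by ring
      rw [this, Nat.factorial_succ, Nat.factorial_succ]
      push_cast; ring
    unfold cR bR
    rw [hu, ha, h4]
    rw [show 2 * (k+1) + 1 = 2 * k + 3 by ring] at *
    push_cast
    linear_combination (-((Nat.factorial (2*k) : ℝ) * ((-δ))^k * (2 + ((m:ℝ) - 2*k) * δ))) * h2
      + ((Nat.factorial (2*k) : ℝ) * ((-δ))^k * (2 + ((m:ℝ) + 1) * δ)) * h3
  · have h0 : m + 1 - 2 * k = 0 := by omega
    have c1 : Nat.choose (m + 3) (2 * (k + 1) + 1) = 0 := Nat.choose_eq_zero_of_lt (by omega)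
    have c2 : Nat.choose (m + 2) (2 * (k + 1) + 1) = 0 := Nat.choose_eq_zero_of_lt (by omega)
    have c3 : Nat.choose (m + 2) (2 * k + 1) = 0 := Nat.choose_eq_zero_of_lt (by omega)
    have c4 : Nat.choose (m + 1) (2 * k + 1) = 0 := Nat.choose_eq_zero_of_lt (by omega)
    unfold cR bR
    rw [h0, c1, c2, c3, c4]
    push_cast
    ring

lemma termX (δ : ℝ) (m k : ℕ) :
    2 * (Polynomial.X : Polynomial ℝ) * (Polynomial.C (cR δ (m + 2) k) * deformedHermiteP δ (m + 1 - 2 * k))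
      = Polynomial.C (cR δ (m + 2) k) * deformedHermiteP δ (m + 2 - 2 * k)
        + Polynomial.C (cR δ (m + 2) k) * Polynomial.C (bR δ (m + 1 - 2 * k)) * deformedHermiteP δ (m - 2 * k) := by
  by_cases hk : 2 * k ≤ m + 1
  · have h1 : m + 1 - 2 * k + 1 = m + 2 - 2 * k := by omega
    have h2 : m + 1 - 2 * k - 1 = m - 2 * k := by omega
    have := dH_mul_X δ (m + 1 - 2 * k)
    rw [h1, h2] at this
    calc 2 * (Polynomial.X : Polynomial ℝ) * (Polynomial.C (cR δ (m + 2) k) * deformedHermiteP δ (m + 1 - 2 * k))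
        = Polynomial.C (cR δ (m + 2) k) * (2 * Polynomial.X * deformedHermiteP δ (m + 1 - 2 * k)) := by ring
      _ = _ := by rw [this]; ring
  · have hc : cR δ (m + 2) k = 0 := by
      have : Nat.choose (m + 2) (2 * k + 1) = 0 := Nat.choose_eq_zero_of_lt (by omega)
      simp [cR, this]
    simp [hc]

lemma aux (δ : ℝ) : ∀ m : ℕ, Polynomial.derivative (deformedHermiteP δ (m + 1))
    = Polynomial.C 2 * ∑ k ∈ Finset.range (m + 1),
        Polynomial.C (cR δ (m + 1) k) * deformedHermiteP δ (m - 2 * k) := by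
  intro m
  induction m using Nat.strong_induction_on with
  | _ m ih =>
    match m with
    | 0 =>
      have hC2 : (Polynomial.C (2:ℝ)) = 2 := map_ofNat Polynomial.C 2
      simp [deformedHermiteP, cR, hC2]
    | 1 =>
      have hC2 : (Polynomial.C (2:ℝ)) = 2 := map_ofNat Polynomial.C 2
      rw [show (1:ℕ) + 1 = 2 from rfl, dH_rec δ 0]
      simp [deformedHermiteP, cR, Finset.sum_range_succ, bR, hC2]
      ring
    | (m + 2) =>
      have h1 := ih (m + 1) (by omega)
      have h0 := ih m (by omega)
      rw [show m + 2 + 1 = (m + 1) + 2 from rfl, dH_rec δ (m + 1)]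
      have e : Polynomial.derivative (2 * Polynomial.X * deformedHermiteP δ (m + 2)
            - Polynomial.C (bR δ (m + 2)) * deformedHermiteP δ (m + 1))
          = Polynomial.C 2 * deformedHermiteP δ (m + 2)
            + 2 * Polynomial.X * Polynomial.derivative (deformedHermiteP δ (m + 2))
            - Polynomial.C (bR δ (m + 2)) * Polynomial.derivative (deformedHermiteP δ (m + 1)) := by
        have hC2 : (Polynomial.C (2:ℝ)) = 2 := map_ofNat Polynomial.C 2
        rw [hC2]
        simp [derivative_mul]
        try ring
      rw [e, h1, h0]
      -- rewrite 2*X * (C 2 * sum) using termX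
      have A : 2 * (Polynomial.X : Polynomial ℝ)
            * (Polynomial.C 2 * ∑ k ∈ Finset.range (m + 1 + 1),
                Polynomial.C (cR δ (m + 1 + 1) k) * deformedHermiteP δ (m + 1 - 2 * k))
          = Polynomial.C 2 * ∑ k ∈ Finset.range (m + 2),
              (Polynomial.C (cR δ (m + 2) k) * deformedHermiteP δ (m + 2 - 2 * k)
                + Polynomial.C (cR δ (m + 2) k) * Polynomial.C (bR δ (m + 1 - 2 * k)) * deformedHermiteP δ (m - 2 * k)) := by
        rw [mul_left_comm]
        congr 1
        rw [Finset.mul_sum]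
        exact Finset.sum_congr rfl fun k _ => termX δ m k
      rw [A]
      -- split the sum
      rw [Finset.sum_add_distrib]
      -- peel k = 0 from the first part
      rw [Finset.sum_range_succ' (fun k => Polynomial.C (cR δ (m + 2) k) * deformedHermiteP δ (m + 2 - 2 * k)) (m + 1)]
      have idx1 : ∀ j ∈ Finset.range (m + 1),
          Polynomial.C (cR δ (m + 2) (j + 1)) * deformedHermiteP δ (m + 2 - 2 * (j + 1))
            = Polynomial.C (cR δ (m + 2) (j + 1)) * deformedHermiteP δ (m - 2 * j) := by
        intro j _
        rw [show m + 2 - 2 * (j + 1) = m - 2 * j by omega]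
      rw [Finset.sum_congr rfl idx1]
      -- peel k = 0 from the RHS sum
      rw [Finset.sum_range_succ' (fun k => Polynomial.C (cR δ (m + 2 + 1) k) * deformedHermiteP δ (m + 2 - 2 * k)) (m + 2)]
      have idx2 : ∀ j ∈ Finset.range (m + 2),
          Polynomial.C (cR δ (m + 2 + 1) (j + 1)) * deformedHermiteP δ (m + 2 - 2 * (j + 1))
            = Polynomial.C (cR δ (m + 3) (j + 1)) * deformedHermiteP δ (m - 2 * j) := by
        intro j _
        rw [show m + 2 - 2 * (j + 1) = m - 2 * j by omega]
      rw [Finset.sum_congr rfl idx2]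
      -- pad the range (m+1) sums to range (m+2)
      have pad1 : ∑ j ∈ Finset.range (m + 2), Polynomial.C (cR δ (m + 2) (j + 1)) * deformedHermiteP δ (m - 2 * j)
          = ∑ j ∈ Finset.range (m + 1), Polynomial.C (cR δ (m + 2) (j + 1)) * deformedHermiteP δ (m - 2 * j) := by
        have hzero : cR δ (m + 2) (m + 1 + 1) = 0 := by
          unfold cR
          rw [show 2 * (m + 1 + 1) + 1 = 2 * m + 5 from by ring,
            Nat.choose_eq_zero_of_lt (by omega)]
          simp
        rw [Finset.sum_range_succ, hzero]
        simp
      have pad3 : ∑ j ∈ Finset.range (m + 2), Polynomial.C (cR δ (m + 1) j) * deformedHermiteP δ (m - 2 * j)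
          = ∑ j ∈ Finset.range (m + 1), Polynomial.C (cR δ (m + 1) j) * deformedHermiteP δ (m - 2 * j) := by
        have hzero : cR δ (m + 1) (m + 1) = 0 := by
          unfold cR
          rw [show 2 * (m + 1) + 1 = 2 * m + 3 from by ring,
            Nat.choose_eq_zero_of_lt (by omega)]
          simp
        rw [Finset.sum_range_succ, hzero]
        simp
      rw [← pad1, ← pad3]
      -- termwise identity from key
      have main : ∀ j ∈ Finset.range (m + 2),
          Polynomial.C (cR δ (m + 3) (j + 1)) * deformedHermiteP δ (m - 2 * j)
            = Polynomial.C (cR δ (m + 2) (j + 1)) * deformedHermiteP δ (m - 2 * j)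
              + Polynomial.C (cR δ (m + 2) j) * Polynomial.C (bR δ (m + 1 - 2 * j)) * deformedHermiteP δ (m - 2 * j)
              - Polynomial.C (bR δ (m + 2)) * (Polynomial.C (cR δ (m + 1) j) * deformedHermiteP δ (m - 2 * j)) := by
        intro j _
        rw [key δ m j]
        rw [map_sub, map_add, map_mul, map_mul]
        ring
      have hsum : ∑ j ∈ Finset.range (m + 2), Polynomial.C (cR δ (m + 3) (j + 1)) * deformedHermiteP δ (m - 2 * j)
          = (∑ j ∈ Finset.range (m + 2), Polynomial.C (cR δ (m + 2) (j + 1)) * deformedHermiteP δ (m - 2 * j))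
            + (∑ j ∈ Finset.range (m + 2), Polynomial.C (cR δ (m + 2) j) * Polynomial.C (bR δ (m + 1 - 2 * j)) * deformedHermiteP δ (m - 2 * j))
            - Polynomial.C (bR δ (m + 2)) * ∑ j ∈ Finset.range (m + 2), Polynomial.C (cR δ (m + 1) j) * deformedHermiteP δ (m - 2 * j) := by
        rw [Finset.sum_congr rfl main, Finset.sum_sub_distrib, Finset.sum_add_distrib, Finset.mul_sum]
      rw [hsum]
      -- constant term: cR δ (m+3) 0 = cR δ (m+2) 0 + 1
      have hc0 : cR δ (m + 2 + 1) 0 = cR δ (m + 2) 0 + 1 := by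
        unfold cR
        rw [Nat.choose_one_right, Nat.choose_one_right, Nat.mul_zero, Nat.factorial_zero]
        push_cast
        ring
      rw [show m + 2 - 2 * 0 = m + 2 by omega, hc0, map_add, map_one]
      ring

theorem deformedHermite_derivative (δ : ℝ) (n : ℕ) (hn : 1 ≤ n) :
    Polynomial.derivative (deformedHermiteP δ n)
      = Polynomial.C 2 * ∑ k ∈ Finset.range ((n - 1) / 2 + 1),
          Polynomial.C ((Nat.factorial (2 * k) : ℝ) * (Nat.choose n (2 * k + 1) : ℝ) *
              (-δ) ^ k) * deformedHermiteP δ (n - 1 - 2 * k) := by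
  obtain ⟨m, rfl⟩ : ∃ m, n = m + 1 := ⟨n - 1, by omega⟩
  rw [aux δ m]
  congr 1
  rw [show m + 1 - 1 = m from rfl]
  refine (Finset.sum_subset (Finset.range_subset_range.2 (by omega)) ?_).symm
  intro k _ hk
  simp only [Finset.mem_range, not_lt] at hk
  have : Nat.choose (m + 1) (2 * k + 1) = 0 := Nat.choose_eq_zero_of_lt (by omega)
  simp [cR, this]
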